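/- Let E be an exact category. An object (P•, ι•) of Mor_k(E) is projective in Mor_k(E) if and only if each P_i is projective in E and each ι_i is a split monomorphism; dually, (I•, π•) is injective in Mor_k(E) if and only if each I_i is injective in E and each π_i is a split epimorphism. -/

import Mathlib

open CategoryTheory Limits

universe v u

/-- An exact structure (in the sense of Quillen/Bühler) on an additive category `E`:
a class of kernel–cokernel pairs (`ses f g` meaning `X ↣ Y ↠ Z` is an admissible short
exact sequence), closed under isomorphism, such that admissible monomorphisms (resp.
epimorphisms) contain identities, are closed under composition, and are stable under
pushout (resp. pullback). -/
structure ExactStructure (E : Type u) [Category.{v} E] [Preadditive E] [HasZeroObject E] where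
  ses : ∀ ⦃X Y Z : E⦄, (X ⟶ Y) → (Y ⟶ Z) → Prop
  comp_zero : ∀ {X Y Z : E} {f : X ⟶ Y} {g : Y ⟶ Z}, ses f g → f ≫ g = 0
  isKernel : ∀ {X Y Z : E} {f : X ⟶ Y} {g : Y ⟶ Z} (h : ses f g),
      Nonempty (IsLimit (KernelFork.ofι f (comp_zero h)))
  isCokernel : ∀ {X Y Z : E} {f : X ⟶ Y} {g : Y ⟶ Z} (h : ses f g),
      Nonempty (IsColimit (CokernelCofork.ofπ g (comp_zero h)))
  iso_closed : ∀ {X Y Z X' Y' Z' : E} {f : X ⟶ Y} {g : Y ⟶ Z}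
      (eX : X ≅ X') (eY : Y ≅ Y') (eZ : Z ≅ Z') {f' : X' ⟶ Y'} {g' : Y' ⟶ Z'},
      f ≫ eY.hom = eX.hom ≫ f' → g ≫ eZ.hom = eY.hom ≫ g' → ses f g → ses f' g'
  id_mono : ∀ X : E, ∃ (Z : E) (g : X ⟶ Z), ses (𝟙 X) g
  id_epi : ∀ X : E, ∃ (W : E) (f : W ⟶ X), ses f (𝟙 X)
  mono_comp : ∀ {X Y Z : E} {f : X ⟶ Y} {g : Y ⟶ Z},
      (∃ (W : E) (h : Y ⟶ W), ses f h) → (∃ (W : E) (h : Z ⟶ W), ses g h) →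
      ∃ (W : E) (h : Z ⟶ W), ses (f ≫ g) h
  epi_comp : ∀ {X Y Z : E} {f : X ⟶ Y} {g : Y ⟶ Z},
      (∃ (W : E) (h : W ⟶ X), ses h f) → (∃ (W : E) (h : W ⟶ Y), ses h g) →
      ∃ (W : E) (h : W ⟶ X), ses h (f ≫ g)
  mono_pushout : ∀ {X Y Z : E} (f : X ⟶ Y) (t : X ⟶ Z),
      (∃ (W : E) (g : Y ⟶ W), ses f g) →
      ∃ (P : E) (f' : Z ⟶ P) (t' : Y ⟶ P), IsPushout t f f' t' ∧
        ∃ (W : E) (g : P ⟶ W), ses f' g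
  epi_pullback : ∀ {X Y Z : E} (g : Y ⟶ X) (t : Z ⟶ X),
      (∃ (W : E) (f : W ⟶ Y), ses f g) →
      ∃ (P : E) (g' : P ⟶ Z) (t' : P ⟶ Y), IsPullback g' t' t g ∧
        ∃ (W : E) (f : W ⟶ P), ses f g'

namespace ExactStructure

variable {E : Type u} [Category.{v} E] [Preadditive E] [HasZeroObject E]
variable (S : ExactStructure E)

/-- `f` is an admissible monomorphism. -/
def AdmMono {X Y : E} (f : X ⟶ Y) : Prop := ∃ (Z : E) (g : Y ⟶ Z), S.ses f g

/-- `g` is an admissible epimorphism. -/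
def AdmEpi {Y Z : E} (g : Y ⟶ Z) : Prop := ∃ (X : E) (f : X ⟶ Y), S.ses f g

/-- An object of `E` is injective (w.r.t. the exact structure). -/
def EInjective (I : E) : Prop :=
  ∀ ⦃X Y : E⦄ (f : X ⟶ Y), S.AdmMono f → ∀ u : X ⟶ I, ∃ v : Y ⟶ I, f ≫ v = u

/-- An object of `E` is projective (w.r.t. the exact structure). -/
def EProjective (P : E) : Prop :=
  ∀ ⦃Y Z : E⦄ (g : Y ⟶ Z), S.AdmEpi g → ∀ u : P ⟶ Z, ∃ v : P ⟶ Y, v ≫ g = u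

/-- An object of the monomorphism category `MMor_k(E)`: a diagram of `k` composable
admissible monomorphisms in `E`. -/
structure MMorObj (k : ℕ) where
  obj : Fin (k + 1) → E
  map : ∀ i : Fin k, obj i.castSucc ⟶ obj i.succ
  adm : ∀ i, S.AdmMono (map i)

/-- A morphism in the monomorphism category `MMor_k(E)`. -/
structure MMorHom {k : ℕ} (X Y : S.MMorObj k) where
  app : ∀ i, X.obj i ⟶ Y.obj i
  comm : ∀ i : Fin k, X.map i ≫ app i.succ = app i.castSucc ≫ Y.map i

variable {S}

/-- A componentwise admissible short exact sequence in `MMor_k(E)`. -/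
def MMorSes {k : ℕ} {X Y Z : S.MMorObj k} (f : S.MMorHom X Y) (g : S.MMorHom Y Z) : Prop :=
  ∀ i, S.ses (f.app i) (g.app i)

/-- Admissible monomorphisms of `MMor_k(E)`. -/
def MMorAdmMono {k : ℕ} {X Y : S.MMorObj k} (f : S.MMorHom X Y) : Prop :=
  ∃ (Z : S.MMorObj k) (g : S.MMorHom Y Z), MMorSes f g

/-- Admissible epimorphisms of `MMor_k(E)`. -/
def MMorAdmEpi {k : ℕ} {Y Z : S.MMorObj k} (g : S.MMorHom Y Z) : Prop :=
  ∃ (X : S.MMorObj k) (f : S.MMorHom X Y), MMorSes f g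

/-- Injective objects of the exact category `MMor_k(E)`. -/
def MMorInjective {k : ℕ} (I : S.MMorObj k) : Prop :=
  ∀ ⦃X Y : S.MMorObj k⦄ (f : S.MMorHom X Y), MMorAdmMono f →
    ∀ u : S.MMorHom X I, ∃ v : S.MMorHom Y I, ∀ i, f.app i ≫ v.app i = u.app i

/-- Projective objects of the exact category `MMor_k(E)`. -/
def MMorProjective {k : ℕ} (P : S.MMorObj k) : Prop :=
  ∀ ⦃Y Z : S.MMorObj k⦄ (g : S.MMorHom Y Z), MMorAdmEpi g →
    ∀ u : S.MMorHom P Z, ∃ v : S.MMorHom P Y, ∀ i, v.app i ≫ g.app i = u.app i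

end ExactStructure

namespace ExactStructure

variable {E : Type u} [Category.{v} E] [Preadditive E] [HasZeroObject E]
variable (S : ExactStructure E)

/-- An object of `Mor_k(E)`: a diagram of `k` composable morphisms in `E`. -/
structure MorObj (k : ℕ) where
  obj : Fin (k + 1) → E
  map : ∀ i : Fin k, obj i.castSucc ⟶ obj i.succ

/-- A morphism in `Mor_k(E)`. -/
structure MorHom {k : ℕ} (X Y : MorObj (E := E) k) where
  app : ∀ i, X.obj i ⟶ Y.obj i
  comm : ∀ i : Fin k, X.map i ≫ app i.succ = app i.castSucc ≫ Y.map i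

variable {S}

/-- A componentwise admissible short exact sequence in `Mor_k(E)`. -/
def MorSes {k : ℕ} {X Y Z : MorObj (E := E) k} (f : MorHom X Y) (g : MorHom Y Z) : Prop :=
  ∀ i, S.ses (f.app i) (g.app i)

/-- Admissible epimorphisms of `Mor_k(E)`. -/
def MorAdmEpi {k : ℕ} {Y Z : MorObj (E := E) k} (g : MorHom Y Z) : Prop :=
  ∃ (X : MorObj (E := E) k) (f : MorHom X Y), MorSes (S := S) f g

/-- Admissible monomorphisms of `Mor_k(E)`. -/
def MorAdmMono {k : ℕ} {X Y : MorObj (E := E) k} (f : MorHom X Y) : Prop :=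
  ∃ (Z : MorObj (E := E) k) (g : MorHom Y Z), MorSes (S := S) f g

/-- Projective objects of the exact category `Mor_k(E)`. -/
def MorProjective {k : ℕ} (P : MorObj (E := E) k) : Prop :=
  ∀ ⦃Y Z : MorObj (E := E) k⦄ (g : MorHom Y Z), MorAdmEpi (S := S) g →
    ∀ u : MorHom P Z, ∃ v : MorHom P Y, ∀ i, v.app i ≫ g.app i = u.app i

/-- Injective objects of the exact category `Mor_k(E)`. -/
def MorInjective {k : ℕ} (I : MorObj (E := E) k) : Prop :=
  ∀ ⦃X Y : MorObj (E := E) k⦄ (f : MorHom X Y), MorAdmMono (S := S) f →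
    ∀ u : MorHom X I, ∃ v : MorHom Y I, ∀ i, f.app i ≫ v.app i = u.app i

end ExactStructure

namespace ExactStructure

open ZeroObject

variable {E : Type u} [Category.{v} E] [Preadditive E] [HasZeroObject E]
variable {S : ExactStructure E}

lemma ses_id_zero (X : E) : S.ses (𝟙 X) (0 : X ⟶ 0) := by
  obtain ⟨Z, g, h⟩ := S.id_mono X
  obtain ⟨hc⟩ := S.isCokernel h
  have hg : g = 0 := by simpa using S.comp_zero h
  have hZ : IsZero Z := by
    rw [IsZero.iff_id_eq_zero]
    apply Cofork.IsColimit.hom_ext hc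
    simp [hg]
  exact S.iso_closed (Iso.refl X) (Iso.refl X) hZ.isoZero (by simp) (by simp [hg]) h

lemma ses_zero_id (X : E) : S.ses (0 : (0 : E) ⟶ X) (𝟙 X) := by
  obtain ⟨W, f, h⟩ := S.id_epi X
  obtain ⟨hk⟩ := S.isKernel h
  have hf : f = 0 := by simpa using S.comp_zero h
  have hW : IsZero W := by
    rw [IsZero.iff_id_eq_zero]
    apply Fork.IsLimit.hom_ext hk
    simp [hf]
  exact S.iso_closed hW.isoZero (Iso.refl X) (Iso.refl X) (by simp [hf]) (by simp) h

lemma ses_zero_zero : S.ses (0 : (0 : E) ⟶ (0 : E)) (0 : (0 : E) ⟶ (0 : E)) := by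
  have h := ses_id_zero (S := S) (0 : E)
  rwa [show 𝟙 (0 : E) = 0 from (isZero_zero E).eq_of_src _ _] at h

lemma ses_lift {X Y Z : E} {f : X ⟶ Y} {g : Y ⟶ Z} (h : S.ses f g) {W : E} (d : W ⟶ Y)
    (hd : d ≫ g = 0) : ∃ e : W ⟶ X, e ≫ f = d := by
  obtain ⟨hk⟩ := S.isKernel h
  obtain ⟨e, he⟩ := KernelFork.IsLimit.lift' hk d hd
  exact ⟨e, by simpa using he⟩

lemma ses_desc {X Y Z : E} {f : X ⟶ Y} {g : Y ⟶ Z} (h : S.ses f g) {W : E} (d : Y ⟶ W)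
    (hd : f ≫ d = 0) : ∃ e : Z ⟶ W, g ≫ e = d := by
  obtain ⟨hc⟩ := S.isCokernel h
  obtain ⟨e, he⟩ := CokernelCofork.IsColimit.desc' hc d hd
  exact ⟨e, by simpa using he⟩

variable {k : ℕ}

/-- Composite of the structure maps of a diagram from index `i` to index `j`. -/
def path (P : MorObj (E := E) k) (i j : Fin (k + 1)) (h : i ≤ j) : P.obj i ⟶ P.obj j :=
  Fin.induction (motive := fun j => ∀ i, i ≤ j → (P.obj i ⟶ P.obj j))
    (fun i h => eqToHom (congrArg P.obj (Fin.le_zero_iff.mp h)))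
    (fun m prev i h =>
      if h' : i ≤ m.castSucc then prev i h' ≫ P.map m
      else eqToHom (congrArg P.obj
        (le_antisymm h (Fin.castSucc_lt_iff_succ_le.mp (not_le.mp h'))).symm.symm))
    j i h

lemma path_self (P : MorObj (E := E) k) (i : Fin (k + 1)) (h : i ≤ i) :
    path P i i h = 𝟙 _ := by
  induction i using Fin.cases with
  | zero => simp only [path, Fin.induction_zero]; simp
  | succ m =>
    simp only [path, Fin.induction_succ]
    rw [dif_neg (not_le.mpr (Fin.castSucc_lt_succ (i := m)))]
    simp

lemma path_succ (P : MorObj (E := E) k) (m : Fin k) (i : Fin (k + 1))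
    (h : i ≤ m.castSucc) (h2 : i ≤ m.succ) :
    path P i m.succ h2 = path P i m.castSucc h ≫ P.map m := by
  simp only [path, Fin.induction_succ]
  rw [dif_pos h]

lemma map_path (P : MorObj (E := E) k) (m : Fin k) (j : Fin (k + 1))
    (h : m.succ ≤ j) (h2 : m.castSucc ≤ j) :
    P.map m ≫ path P m.succ j h = path P m.castSucc j h2 := by
  induction j using Fin.induction with
  | zero => exact absurd (Fin.le_zero_iff.mp h) (Fin.succ_ne_zero m)
  | succ n ih =>
    by_cases h' : m.succ ≤ n.castSucc
    · have h'' : m.castSucc ≤ n.castSucc := (Fin.castSucc_lt_succ (i := m)).le.trans h'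
      rw [path_succ P n _ h' h, path_succ P n _ h'' h2, ← Category.assoc, ih h' h'']
    · have hmn : m = n := le_antisymm (Fin.succ_le_succ_iff.mp h)
        (Fin.castSucc_lt_succ_iff.mp (not_le.mp h'))
      subst hmn
      rw [path_succ P m m.castSucc le_rfl h2, path_self, path_self]
      simp

/-- The object of `Mor_k(E)` that is `A` up to index `c` (with identity maps) and `0` after. -/
noncomputable def sObj (c : Fin (k + 1)) (A : E) : MorObj (E := E) k where
  obj j := if j ≤ c then A else 0
  map i :=
    if h : i.succ ≤ c then
      eqToHom (show (if i.castSucc ≤ c then A else 0) = (if i.succ ≤ c then A else 0) by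
        rw [if_pos ((Fin.castSucc_lt_succ (i := i)).le.trans h), if_pos h])
    else 0

/-- The object of `Mor_k(E)` that is `0` before index `d` and `A` from `d` on. -/
noncomputable def tObj (d : Fin (k + 1)) (A : E) : MorObj (E := E) k where
  obj j := if d ≤ j then A else 0
  map i :=
    if h : d ≤ i.castSucc then
      eqToHom (show (if d ≤ i.castSucc then A else 0) = (if d ≤ i.succ then A else 0) by
        rw [if_pos h, if_pos (h.trans (Fin.castSucc_lt_succ (i := i)).le)])
    else 0

/-- The constant object of `Mor_k(E)`. -/
def cObj (A : E) : MorObj (E := E) k where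
  obj _ := A
  map _ := 𝟙 A

attribute [reducible] sObj tObj cObj

noncomputable def sHom (c : Fin (k + 1)) {A B : E} (φ : A ⟶ B) : MorHom (sObj (E := E) c A) (sObj c B) where
  app j := if h : j ≤ c then eqToHom (if_pos h) ≫ φ ≫ eqToHom (if_pos h).symm else 0
  comm i := by
    by_cases h : i.succ ≤ c
    · have hc : i.castSucc ≤ c := (Fin.castSucc_lt_succ (i := i)).le.trans h
      simp [sObj, h, hc]
    · simp [sObj, h]

noncomputable def tHom (d : Fin (k + 1)) {A B : E} (φ : A ⟶ B) : MorHom (tObj (E := E) d A) (tObj d B) where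
  app j := if h : d ≤ j then eqToHom (if_pos h) ≫ φ ≫ eqToHom (if_pos h).symm else 0
  comm i := by
    by_cases h : d ≤ i.castSucc
    · have hs : d ≤ i.succ := h.trans (Fin.castSucc_lt_succ (i := i)).le
      simp [tObj, h, hs]
    · simp [tObj, h]

lemma sHom_ses (c : Fin (k + 1)) {X Y Z : E} {f : X ⟶ Y} {g : Y ⟶ Z} (h : S.ses f g) :
    MorSes (S := S) (sHom c f) (sHom c g) := by
  intro j
  by_cases hj : j ≤ c
  · exact S.iso_closed (eqToIso (if_pos hj).symm) (eqToIso (if_pos hj).symm)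
      (eqToIso (if_pos hj).symm)
      (by simp [sHom, dif_pos hj]) (by simp [sHom, dif_pos hj]) h
  · exact S.iso_closed (eqToIso (if_neg hj).symm) (eqToIso (if_neg hj).symm)
      (eqToIso (if_neg hj).symm)
      (by simp [sHom, dif_neg hj]) (by simp [sHom, dif_neg hj]) ses_zero_zero

lemma tHom_ses (d : Fin (k + 1)) {X Y Z : E} {f : X ⟶ Y} {g : Y ⟶ Z} (h : S.ses f g) :
    MorSes (S := S) (tHom d f) (tHom d g) := by
  intro j
  by_cases hj : d ≤ j
  · exact S.iso_closed (eqToIso (if_pos hj).symm) (eqToIso (if_pos hj).symm)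
      (eqToIso (if_pos hj).symm)
      (by simp [tHom, dif_pos hj]) (by simp [tHom, dif_pos hj]) h
  · exact S.iso_closed (eqToIso (if_neg hj).symm) (eqToIso (if_neg hj).symm)
      (eqToIso (if_neg hj).symm)
      (by simp [tHom, dif_neg hj]) (by simp [tHom, dif_neg hj]) ses_zero_zero

noncomputable def fSplit (s : Fin (k + 1)) (A : E) : MorHom (tObj (E := E) s A) (cObj A) where
  app j := if h : s ≤ j then eqToHom (if_pos h) else 0
  comm i := by
    by_cases h : s ≤ i.castSucc
    · have hs : s ≤ i.succ := h.trans (Fin.castSucc_lt_succ (i := i)).le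
      simp [tObj, cObj, h, hs]
    · simp [tObj, cObj, h]

noncomputable def gSplit (c : Fin (k + 1)) (A : E) : MorHom (cObj (E := E) A) (sObj c A) where
  app j := if h : j ≤ c then eqToHom (if_pos h).symm else 0
  comm i := by
    by_cases h : i.succ ≤ c
    · have hc : i.castSucc ≤ c := (Fin.castSucc_lt_succ (i := i)).le.trans h
      simp [sObj, cObj, h, hc]
    · simp [sObj, cObj, h]

lemma split_ses (m : Fin k) (A : E) :
    MorSes (S := S) (fSplit m.succ A) (gSplit m.castSucc A) := by
  intro j
  by_cases h : j ≤ m.castSucc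
  · have h2 : ¬ m.succ ≤ j := not_le.mpr (lt_of_le_of_lt h (Fin.castSucc_lt_succ (i := m)))
    exact S.iso_closed (eqToIso (if_neg h2).symm) (Iso.refl A) (eqToIso (if_pos h).symm)
      (by simp [fSplit, dif_neg h2]) (by simp [gSplit, dif_pos h]) (ses_zero_id A)
  · have h2 : m.succ ≤ j := Fin.castSucc_lt_iff_succ_le.mp (not_le.mp h)
    exact S.iso_closed (eqToIso (if_pos h2).symm) (Iso.refl A) (eqToIso (if_neg h).symm)
      (by simp [fSplit, dif_pos h2]) (by simp [gSplit, dif_neg h]) (ses_id_zero A)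

noncomputable def toS (P : MorObj (E := E) k) {A : E} (j : Fin (k + 1)) (u : P.obj j ⟶ A) :
    MorHom P (sObj j A) where
  app i := if h : i ≤ j then path P i j h ≫ u ≫ eqToHom (if_pos h).symm else 0
  comm m := by
    beta_reduce
    by_cases h : m.succ ≤ j
    · have hc : m.castSucc ≤ j := (Fin.castSucc_lt_succ (i := m)).le.trans h
      rw [dif_pos h, dif_pos hc, ← Category.assoc, map_path P m j h hc]
      simp [sObj, h]
    · rw [dif_neg h]
      by_cases hc : m.castSucc ≤ j
      · rw [dif_pos hc]; simp [sObj, h]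
      · rw [dif_neg hc]; simp

noncomputable def fromT (I : MorObj (E := E) k) {A : E} (j : Fin (k + 1)) (u : A ⟶ I.obj j) :
    MorHom (tObj j A) I where
  app i := if h : j ≤ i then eqToHom (if_pos h) ≫ u ≫ path I j i h else 0
  comm m := by
    beta_reduce
    by_cases h : j ≤ m.castSucc
    · have hs : j ≤ m.succ := h.trans (Fin.castSucc_lt_succ (i := m)).le
      rw [dif_pos h, dif_pos hs, path_succ I m j h hs]
      simp [tObj, h]
    · rw [dif_neg h]
      simp [tObj, h]

lemma exists_fin_chain {M : Fin (k + 1) → Type*}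
    (R : ∀ m : Fin k, M m.castSucc → M m.succ → Prop)
    (z : M 0) (st : ∀ m (x : M m.castSucc), {y : M m.succ // R m x y}) :
    ∃ V : ∀ i, M i, ∀ m, R m (V m.castSucc) (V m.succ) := by
  refine ⟨Fin.induction z (fun m x => (st m x).1), fun m => ?_⟩
  beta_reduce
  rw [Fin.induction_succ]
  exact (st m _).2

lemma exists_fin_chain_rev {M : Fin (k + 1) → Type*}
    (R : ∀ m : Fin k, M m.succ → M m.castSucc → Prop)
    (z : M (Fin.last k)) (st : ∀ m (x : M m.succ), {y : M m.castSucc // R m x y}) :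
    ∃ V : ∀ i, M i, ∀ m, R m (V m.succ) (V m.castSucc) := by
  refine ⟨Fin.reverseInduction z (fun m x => (st m x).1), fun m => ?_⟩
  beta_reduce
  rw [Fin.reverseInduction_castSucc]
  exact (st m _).2

lemma morProjective_of (P : MorObj (E := E) k)
    (hP : ∀ i, S.EProjective (P.obj i))
    (hsplit : ∀ i : Fin k, ∃ r : P.obj i.succ ⟶ P.obj i.castSucc,
      P.map i ≫ r = 𝟙 (P.obj i.castSucc)) :
    MorProjective (S := S) P := by
  intro Y Z g hg u
  obtain ⟨X, f, hses⟩ := hg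
  have key : ∀ (m : Fin k) (vc : P.obj m.castSucc ⟶ Y.obj m.castSucc),
      vc ≫ g.app m.castSucc = u.app m.castSucc →
      ∃ vs : P.obj m.succ ⟶ Y.obj m.succ,
        vs ≫ g.app m.succ = u.app m.succ ∧ P.map m ≫ vs = vc ≫ Y.map m := by
    intro m vc hvc
    obtain ⟨w, hw⟩ := hP m.succ (g.app m.succ) ⟨_, _, hses m.succ⟩ (u.app m.succ)
    have hd : (P.map m ≫ w - vc ≫ Y.map m) ≫ g.app m.succ = 0 := by
      rw [Preadditive.sub_comp, Category.assoc, hw, Category.assoc, g.comm m,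
        u.comm m, ← Category.assoc, hvc, sub_self]
    obtain ⟨e, he⟩ := ses_lift (hses m.succ) _ hd
    obtain ⟨r, hr⟩ := hsplit m
    refine ⟨w - r ≫ e ≫ f.app m.succ, ?_, ?_⟩
    · have h0 : f.app m.succ ≫ g.app m.succ = 0 := S.comp_zero (hses m.succ)
      rw [Preadditive.sub_comp, Category.assoc, Category.assoc, h0]
      simp [hw]
    · have h1 : P.map m ≫ (r ≫ e ≫ f.app m.succ) = e ≫ f.app m.succ := by
        rw [← Category.assoc, hr, Category.id_comp]
      rw [Preadditive.comp_sub, h1, he]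
      exact sub_sub_cancel _ _
  obtain ⟨v0, hv0⟩ := hP 0 (g.app 0) ⟨_, _, hses 0⟩ (u.app 0)
  obtain ⟨V, hV⟩ := exists_fin_chain
      (M := fun i => {φ : P.obj i ⟶ Y.obj i // φ ≫ g.app i = u.app i})
      (R := fun m x y => P.map m ≫ y.1 = x.1 ≫ Y.map m)
      ⟨v0, hv0⟩
      (fun m x => ⟨⟨(key m x.1 x.2).choose, (key m x.1 x.2).choose_spec.1⟩,
        (key m x.1 x.2).choose_spec.2⟩)
  exact ⟨⟨fun i => (V i).1, fun m => hV m⟩, fun i => (V i).2⟩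

lemma morInjective_of (I : MorObj (E := E) k)
    (hI : ∀ i, S.EInjective (I.obj i))
    (hsplit : ∀ m : Fin k, ∃ s : I.obj m.succ ⟶ I.obj m.castSucc,
      s ≫ I.map m = 𝟙 (I.obj m.succ)) :
    MorInjective (S := S) I := by
  intro X Y f hf u
  obtain ⟨Z, g, hses⟩ := hf
  have key : ∀ (m : Fin k) (vs : Y.obj m.succ ⟶ I.obj m.succ),
      f.app m.succ ≫ vs = u.app m.succ →
      ∃ vc : Y.obj m.castSucc ⟶ I.obj m.castSucc,
        f.app m.castSucc ≫ vc = u.app m.castSucc ∧ Y.map m ≫ vs = vc ≫ I.map m := by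
    intro m vs hvs
    obtain ⟨w, hw⟩ := hI m.castSucc (f.app m.castSucc) ⟨_, _, hses m.castSucc⟩
      (u.app m.castSucc)
    have hd : f.app m.castSucc ≫ (Y.map m ≫ vs - w ≫ I.map m) = 0 := by
      rw [Preadditive.comp_sub, ← Category.assoc, ← f.comm m, Category.assoc, hvs,
        u.comm m, ← Category.assoc, hw, sub_self]
    obtain ⟨e, he⟩ := ses_desc (hses m.castSucc) _ hd
    obtain ⟨sec, hsec⟩ := hsplit m
    refine ⟨w + g.app m.castSucc ≫ e ≫ sec, ?_, ?_⟩
    · have h0 : f.app m.castSucc ≫ g.app m.castSucc = 0 := S.comp_zero (hses m.castSucc)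
      rw [Preadditive.comp_add, hw, ← Category.assoc, h0]
      simp
    · have h1 : (g.app m.castSucc ≫ e ≫ sec) ≫ I.map m = g.app m.castSucc ≫ e := by
        rw [Category.assoc, Category.assoc, hsec, Category.comp_id]
      rw [Preadditive.add_comp, h1, he]
      abel
  obtain ⟨vl, hvl⟩ := hI (Fin.last k) (f.app (Fin.last k)) ⟨_, _, hses (Fin.last k)⟩
    (u.app (Fin.last k))
  obtain ⟨V, hV⟩ := exists_fin_chain_rev
      (M := fun i => {φ : Y.obj i ⟶ I.obj i // f.app i ≫ φ = u.app i})
      (R := fun m x y => Y.map m ≫ x.1 = y.1 ≫ I.map m)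
      ⟨vl, hvl⟩
      (fun m x => ⟨⟨(key m x.1 x.2).choose, (key m x.1 x.2).choose_spec.1⟩,
        (key m x.1 x.2).choose_spec.2⟩)
  exact ⟨⟨fun i => (V i).1, fun m => hV m⟩, fun i => (V i).2⟩

lemma eprojective_of_mor (P : MorObj (E := E) k) (h : MorProjective (S := S) P)
    (j : Fin (k + 1)) : S.EProjective (P.obj j) := by
  intro Y Z g hg u
  obtain ⟨X, f, hfg⟩ := hg
  obtain ⟨v, hv⟩ := h (sHom j g) ⟨sObj j X, sHom j f, sHom_ses j hfg⟩ (toS P j u)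
  refine ⟨v.app j ≫ eqToHom (if_pos (le_refl j)), ?_⟩
  have h0 := hv j
  simp only [sHom, toS, dif_pos (le_refl j), path_self] at h0
  have h1 := congrArg (fun t => t ≫ eqToHom (if_pos (le_refl j))) h0
  simpa using h1

lemma mor_split_mono (P : MorObj (E := E) k) (h : MorProjective (S := S) P)
    (m : Fin k) : ∃ r : P.obj m.succ ⟶ P.obj m.castSucc,
      P.map m ≫ r = 𝟙 (P.obj m.castSucc) := by
  obtain ⟨v, hv⟩ := h (gSplit m.castSucc (P.obj m.castSucc))
    ⟨tObj m.succ _, fSplit m.succ _, split_ses m _⟩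
    (toS P m.castSucc (𝟙 _))
  have h0 := hv m.castSucc
  simp only [gSplit, toS, dif_pos (le_refl m.castSucc), path_self] at h0
  have h1 : v.app m.castSucc = 𝟙 _ := by
    have h2 := congrArg (fun t => t ≫ eqToHom (if_pos (le_refl m.castSucc))) h0
    simpa using h2
  have h2 := v.comm m
  refine ⟨v.app m.succ, ?_⟩
  rw [h2, h1]
  simp [cObj]

lemma einjective_of_mor (I : MorObj (E := E) k) (h : MorInjective (S := S) I)
    (j : Fin (k + 1)) : S.EInjective (I.obj j) := by
  intro X Y f hf u
  obtain ⟨C, g, hfg⟩ := hf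
  obtain ⟨v, hv⟩ := h (tHom j f) ⟨tObj j C, tHom j g, tHom_ses j hfg⟩ (fromT I j u)
  refine ⟨eqToHom (if_pos (le_refl j)).symm ≫ v.app j, ?_⟩
  have h0 := hv j
  simp only [tHom, fromT, dif_pos (le_refl j), path_self] at h0
  have h1 := congrArg (fun t => eqToHom (if_pos (le_refl j)).symm ≫ t) h0
  simpa using h1

lemma mor_split_epi (I : MorObj (E := E) k) (h : MorInjective (S := S) I)
    (m : Fin k) : ∃ s : I.obj m.succ ⟶ I.obj m.castSucc,
      s ≫ I.map m = 𝟙 (I.obj m.succ) := by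
  obtain ⟨v, hv⟩ := h (fSplit m.succ (I.obj m.succ))
    ⟨sObj m.castSucc _, gSplit m.castSucc _, split_ses m _⟩
    (fromT I m.succ (𝟙 _))
  have h0 := hv m.succ
  simp only [fSplit, fromT, dif_pos (le_refl m.succ), path_self] at h0
  have h1 : v.app m.succ = 𝟙 _ := by
    have h2 := congrArg (fun t => eqToHom (if_pos (le_refl m.succ)).symm ≫ t) h0
    simpa using h2
  have h2 := v.comm m
  simp only [cObj, Category.id_comp, h1] at h2
  exact ⟨v.app m.castSucc, h2.symm⟩

end ExactStructure


/-- Let `E` be an exact category.  An object `(P•, ι•)` of `Mor_k(E)` is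
projective if and only if each `P i` is projective in `E` and each `ι i` is a split
monomorphism; dually, `(I•, π•)` is injective in `Mor_k(E)` if and only if each `I i` is
injective in `E` and each `π i` is a split epimorphism. -/
theorem mor_projective_injective_iff
    {E : Type u} [Category.{v} E] [Preadditive E] [HasZeroObject E]
    (S : ExactStructure E) (k : ℕ) :
    (∀ P : ExactStructure.MorObj (E := E) k,
      ExactStructure.MorProjective (S := S) P ↔
        ((∀ i, S.EProjective (P.obj i)) ∧
          ∀ i : Fin k, ∃ r : P.obj i.succ ⟶ P.obj i.castSucc,
            P.map i ≫ r = 𝟙 (P.obj i.castSucc))) ∧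
    (∀ I : ExactStructure.MorObj (E := E) k,
      ExactStructure.MorInjective (S := S) I ↔
        ((∀ i, S.EInjective (I.obj i)) ∧
          ∀ i : Fin k, ∃ s : I.obj i.succ ⟶ I.obj i.castSucc,
            s ≫ I.map i = 𝟙 (I.obj i.succ))) := by
  constructor
  · intro P
    constructor
    · intro h
      exact ⟨ExactStructure.eprojective_of_mor P h, ExactStructure.mor_split_mono P h⟩
    · rintro ⟨h1, h2⟩
      exact ExactStructure.morProjective_of P h1 h2
  · intro I
    constructor
    · intro h
      exact ⟨ExactStructure.einjective_of_mor I h, ExactStructure.mor_split_epi I h⟩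
    · rintro ⟨h1, h2⟩
      exact ExactStructure.morInjective_of I h1 h2
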